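/- Let k be a field, V a finite-dimensional k-vector space, and H a finite group acting linearly on V. If x, y, z ∈ H generate H and satisfy x·y·z = 1, then dim V + dim V^H + dim (V*)^H ≥ dim V^x + dim V^y + dim V^z, where V^g denotes the subspace of vectors fixed by g and V* the dual representation. -/

import Mathlib

open Module LinearMap

section aux

variable {k V H : Type*} [Field k] [AddCommGroup V] [Module k V]
    [FiniteDimensional k V] [Group H] [Fintype H]

theorem scott_aux_fix (ρ : Representation k H V) (x y z : H)
    (hgen : Subgroup.closure ({x, y, z} : Set H) = ⊤)
    (w : V) (hx : ρ x w = w) (hy : ρ y w = w) (hz : ρ z w = w) (h : H) :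
    ρ h w = w := by
  have hmem : h ∈ Subgroup.closure ({x, y, z} : Set H) := by
    rw [hgen]; exact Subgroup.mem_top h
  induction hmem using Subgroup.closure_induction with
  | mem g hg =>
    rcases hg with rfl | rfl | rfl
    · exact hx
    · exact hy
    · exact hz
  | one => simp
  | mul a b _ _ ha hb =>
    have : ρ (a * b) w = ρ a (ρ b w) := by
      rw [map_mul]; rfl
    rw [this, hb, ha]
  | inv a _ ha =>
    have : ρ a⁻¹ (ρ a w) = w := by
      rw [← Module.End.mul_apply, ← map_mul, inv_mul_cancel, map_one, Module.End.one_apply]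
    rw [ha] at this
    exact this

theorem scott_aux_dualfix (ρ : Representation k H V) (x y z : H)
    (hgen : Subgroup.closure ({x, y, z} : Set H) = ⊤)
    (f : Module.Dual k V) (hx : ∀ v, f (ρ x v) = f v) (hy : ∀ v, f (ρ y v) = f v)
    (hz : ∀ v, f (ρ z v) = f v) (h : H) :
    ∀ v, f (ρ h v) = f v := by
  have hmem : h ∈ Subgroup.closure ({x, y, z} : Set H) := by
    rw [hgen]; exact Subgroup.mem_top h
  induction hmem using Subgroup.closure_induction with
  | mem g hg =>
    rcases hg with rfl | rfl | rfl
    · exact hx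
    · exact hy
    · exact hz
  | one => simp
  | mul a b _ _ ha hb =>
    intro v
    have : ρ (a * b) v = ρ a (ρ b v) := by rw [map_mul]; rfl
    rw [this, ha, hb]
  | inv a _ ha =>
    intro v
    have h1 : ρ a (ρ a⁻¹ v) = v := by
      rw [← Module.End.mul_apply, ← map_mul, mul_inv_cancel, map_one, Module.End.one_apply]
    have := ha (ρ a⁻¹ v)
    rw [h1] at this
    exact this.symm

end aux

theorem scott_lemma {k V H : Type*} [Field k] [AddCommGroup V] [Module k V]
    [FiniteDimensional k V] [Group H] [Fintype H]
    (ρ : Representation k H V) (x y z : H)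
    (hgen : Subgroup.closure ({x, y, z} : Set H) = ⊤) (hxyz : x * y * z = 1) :
    Module.finrank k (LinearMap.ker (ρ x - LinearMap.id)) +
      Module.finrank k (LinearMap.ker (ρ y - LinearMap.id)) +
      Module.finrank k (LinearMap.ker (ρ z - LinearMap.id)) ≤
    Module.finrank k V +
      Module.finrank k ↥(⨅ h : H, LinearMap.ker (ρ h - LinearMap.id)) +
      Module.finrank k ↥(⨅ h : H, LinearMap.ker (ρ.dual h - LinearMap.id)) := by
  classical
  -- key consequence of `x * y * z = 1`
  have hxy : ∀ v : V, ρ x (ρ y (ρ z v)) = v := by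
    intro v
    have : ρ x (ρ y (ρ z v)) = ρ (x * y * z) v := by
      simp [map_mul, Module.End.mul_apply]
    rw [this, hxyz, map_one, Module.End.one_apply]
  set Kx := LinearMap.ker (ρ x - LinearMap.id) with hKx
  set Ky := LinearMap.ker (ρ y - LinearMap.id) with hKy
  set Kz := LinearMap.ker (ρ z - LinearMap.id) with hKz
  have memKx : ∀ v : V, v ∈ Kx ↔ ρ x v = v := by
    intro v; rw [hKx, LinearMap.mem_ker, LinearMap.sub_apply, LinearMap.id_apply, sub_eq_zero]
  have memKy : ∀ v : V, v ∈ Ky ↔ ρ y v = v := by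
    intro v; rw [hKy, LinearMap.mem_ker, LinearMap.sub_apply, LinearMap.id_apply, sub_eq_zero]
  have memKz : ∀ v : V, v ∈ Kz ↔ ρ z v = v := by
    intro v; rw [hKz, LinearMap.mem_ker, LinearMap.sub_apply, LinearMap.id_apply, sub_eq_zero]
  -- the map F with range W
  set F : (V × V) →ₗ[k] V :=
    LinearMap.coprod (ρ x - LinearMap.id) ((ρ x : V →ₗ[k] V) ∘ₗ (ρ y - LinearMap.id)) with hF
  set W : Submodule k V := LinearMap.range F with hW
  -- the map Θ₀
  let j1 : (Kx × Ky × Kz) →ₗ[k] V := Kx.subtype ∘ₗ (LinearMap.fst k Kx (Ky × Kz))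
  let j2 : (Kx × Ky × Kz) →ₗ[k] V :=
    Ky.subtype ∘ₗ (LinearMap.fst k Ky Kz) ∘ₗ (LinearMap.snd k Kx (Ky × Kz))
  let j3 : (Kx × Ky × Kz) →ₗ[k] V :=
    Kz.subtype ∘ₗ (LinearMap.snd k Ky Kz) ∘ₗ (LinearMap.snd k Kx (Ky × Kz))
  let Θ₀ : (Kx × Ky × Kz) →ₗ[k] V × V := LinearMap.prod (j1 + j3) (j2 + j3)
  have hΘ₀mem : ∀ d : Kx × Ky × Kz, Θ₀ d ∈ LinearMap.ker F := by
    rintro ⟨u, v, w⟩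
    have hu : ρ x (u : V) = u := (memKx u).mp u.2
    have hv : ρ y (v : V) = v := (memKy v).mp v.2
    have hw : ρ z (w : V) = w := (memKz w).mp w.2
    have hxyw : ρ x (ρ y (w : V)) = w := by
      conv_lhs => rw [← hw]
      exact hxy w
    simp only [LinearMap.mem_ker, Θ₀, j1, j2, j3, hF, LinearMap.prod_apply, Function.prod,
      LinearMap.coprod_apply, LinearMap.comp_apply, LinearMap.fst_apply, LinearMap.snd_apply,
      LinearMap.add_apply, LinearMap.sub_apply, LinearMap.id_apply, Submodule.coe_subtype,
      map_add]
    simp only [map_sub, map_add, hxyw, hu, hv, sub_self, map_zero]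
    abel
  let Θ : (Kx × Ky × Kz) →ₗ[k] LinearMap.ker F := LinearMap.codRestrict _ Θ₀ hΘ₀mem
  -- kernel of Θ embeds into the fixed space of H
  have hkerΘ : Module.finrank k (LinearMap.ker Θ) ≤
      Module.finrank k ↥(⨅ h : H, LinearMap.ker (ρ h - LinearMap.id)) := by
    have hprop : ∀ e : LinearMap.ker Θ,
        j3 (e : Kx × Ky × Kz) ∈ ⨅ h : H, LinearMap.ker (ρ h - LinearMap.id) := by
      rintro ⟨⟨u, v, w⟩, he⟩
      have he' : Θ₀ (u, v, w) = 0 := by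
        have := congrArg (Subtype.val) (LinearMap.mem_ker.mp he)
        simpa [Θ] using this
      have h1 : (u : V) + (w : V) = 0 ∧ (v : V) + (w : V) = 0 := by
        constructor
        · exact congrArg Prod.fst he'
        · exact congrArg Prod.snd he'
      have hwx : (w : V) ∈ Kx := by
        have : (w : V) = -(u : V) := eq_neg_of_add_eq_zero_right h1.1
        rw [this]; exact neg_mem u.2
      have hwy : (w : V) ∈ Ky := by
        have : (w : V) = -(v : V) := eq_neg_of_add_eq_zero_right h1.2
        rw [this]; exact neg_mem v.2
      have hall : ∀ h : H, ρ h (w : V) = w :=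
        scott_aux_fix ρ x y z hgen w ((memKx w).mp hwx) ((memKy w).mp hwy) ((memKz w).mp w.2)
      simp only [Submodule.mem_iInf, LinearMap.mem_ker, LinearMap.sub_apply,
        LinearMap.id_apply, sub_eq_zero]
      intro h
      simpa [j3] using hall h
    let ψ : LinearMap.ker Θ →ₗ[k] ↥(⨅ h : H, LinearMap.ker (ρ h - LinearMap.id)) :=
      LinearMap.codRestrict _ (j3 ∘ₗ (LinearMap.ker Θ).subtype) hprop
    have hinj : Function.Injective ψ := by
      rintro ⟨⟨u, v, w⟩, he⟩ ⟨⟨u', v', w'⟩, he'⟩ hψ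
      have hw : (w : V) = (w' : V) := by
        have := congrArg Subtype.val hψ
        exact this
      have g1 : Θ₀ (u, v, w) = 0 := by
        have := congrArg (Subtype.val) (LinearMap.mem_ker.mp he)
        simpa [Θ] using this
      have g2 : Θ₀ (u', v', w') = 0 := by
        have := congrArg (Subtype.val) (LinearMap.mem_ker.mp he')
        simpa [Θ] using this
      have e1 : (u : V) + (w : V) = 0 := congrArg Prod.fst g1
      have e2 : (v : V) + (w : V) = 0 := congrArg Prod.snd g1
      have e1' : (u' : V) + (w' : V) = 0 := congrArg Prod.fst g2
      have e2' : (v' : V) + (w' : V) = 0 := congrArg Prod.snd g2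
      apply Subtype.ext
      refine Prod.ext (Subtype.ext ?_) (Prod.ext (Subtype.ext ?_) (Subtype.ext ?_))
      · rw [eq_neg_of_add_eq_zero_left e1, eq_neg_of_add_eq_zero_left e1', hw]
      · rw [eq_neg_of_add_eq_zero_left e2, eq_neg_of_add_eq_zero_left e2', hw]
      · exact hw
    exact LinearMap.finrank_le_finrank_of_injective hinj
  -- the dual annihilator of W sits inside the dual fixed space
  have hannW : W.dualAnnihilator ≤ ⨅ h : H, LinearMap.ker (ρ.dual h - LinearMap.id) := by
    intro f hf
    rw [Submodule.mem_dualAnnihilator] at hf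
    have hfx : ∀ v : V, f (ρ x v) = f v := by
      intro v
      have : (ρ x) v - v ∈ W := by
        rw [hW]
        exact ⟨(v, 0), by simp [hF]⟩
      have := hf _ this
      rw [map_sub, sub_eq_zero] at this
      exact this
    have hfy : ∀ v : V, f (ρ y v) = f v := by
      intro v
      have hmem : (ρ x) ((ρ y) v - v) ∈ W := by
        rw [hW]
        exact ⟨(0, v), by simp [hF]⟩
      have h0 := hf _ hmem
      rw [map_sub, map_sub, hfx ((ρ y) v), hfx v, sub_eq_zero] at h0
      exact h0
    have hfz : ∀ v : V, f (ρ z v) = f v := by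
      intro v
      conv_rhs => rw [← hxy v]
      rw [hfx, hfy]
    have hall := scott_aux_dualfix ρ x y z hgen f hfx hfy hfz
    simp only [Submodule.mem_iInf, LinearMap.mem_ker, LinearMap.sub_apply,
      LinearMap.id_apply, sub_eq_zero]
    intro h
    ext v
    show f ((ρ h⁻¹) v) = f v
    exact hall h⁻¹ v
  -- dimension bookkeeping
  have e1 : Module.finrank k (LinearMap.range Θ) + Module.finrank k (LinearMap.ker Θ) =
      Module.finrank k Kx + (Module.finrank k Ky + Module.finrank k Kz) := by
    rw [LinearMap.finrank_range_add_finrank_ker Θ, Module.finrank_prod, Module.finrank_prod]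
  have e2 : Module.finrank k W + Module.finrank k (LinearMap.ker F) =
      Module.finrank k V + Module.finrank k V := by
    rw [hW, LinearMap.finrank_range_add_finrank_ker F, Module.finrank_prod]
  have e3 : Module.finrank k (V ⧸ W) + Module.finrank k W = Module.finrank k V :=
    Submodule.finrank_quotient_add_finrank W
  have e4 : Module.finrank k (V ⧸ W) = Module.finrank k W.dualAnnihilator :=
    LinearEquiv.finrank_eq (Subspace.quotEquivAnnihilator W)
  have i5 : Module.finrank k (LinearMap.range Θ) ≤ Module.finrank k (LinearMap.ker F) :=
    Submodule.finrank_le _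
  have i7 : Module.finrank k W.dualAnnihilator ≤
      Module.finrank k ↥(⨅ h : H, LinearMap.ker (ρ.dual h - LinearMap.id)) :=
    Submodule.finrank_mono hannW
  omega
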